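/- If the N interpolation points X_1,...,X_N are the roots of the N-th Legendre polynomial (shifted to [0,1]), then the mass matrix M with entries M_{ij} = ∫_0^1 h_i(z) h_j(z) dz is diagonal, i.e., M_{ij} = 0 whenever i ≠ j. -/

import Mathlib

open Polynomial intervalIntegral

/-- If the interpolation points are the roots of a degree-`N` polynomial that is
`L²([0,1])`-orthogonal to all polynomials of lower degree (the shifted Legendre
polynomial), then the mass matrix `M_{ij} = ∫_0^1 h_i h_j` is diagonal. -/
theorem mass_matrix_diagonal_at_legendre_roots (N : ℕ) (hN : 0 < N)
    (P : Polynomial ℝ) (hPdeg : P.natDegree = N)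
    (hPorth : ∀ q : Polynomial ℝ, q.degree < N →
      ∫ x in (0:ℝ)..1, P.eval x * q.eval x = 0)
    (X : Fin N → ℝ) (hX : Function.Injective X)
    (hroots : ∀ i, P.eval (X i) = 0) (hX01 : ∀ i, X i ∈ Set.Ioo (0:ℝ) 1) :
    ∀ i j : Fin N, i ≠ j →
      ∫ z in (0:ℝ)..1,
        (Lagrange.basis Finset.univ X i).eval z *
        (Lagrange.basis Finset.univ X j).eval z = 0 := by
  intro i j hij
  set hi := Lagrange.basis Finset.univ X i with hhi
  set hj := Lagrange.basis Finset.univ X j with hhj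
  have hXinj : Set.InjOn X ↑(Finset.univ : Finset (Fin N)) := hX.injOn
  have hdi : hi.natDegree = N - 1 := by
    simpa using Lagrange.natDegree_basis hXinj (Finset.mem_univ i)
  have hdj : hj.natDegree = N - 1 := by
    simpa using Lagrange.natDegree_basis hXinj (Finset.mem_univ j)
  set p : Polynomial ℝ := ∏ k : Fin N, (Polynomial.X - C (X k)) with hp
  have hcop : (↑(Finset.univ : Finset (Fin N)) : Set (Fin N)).Pairwise
      (Function.onFun IsCoprime fun k => Polynomial.X - C (X k)) :=
    (Polynomial.pairwise_coprime_X_sub_C hX).set_pairwise _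
  -- p divides hi * hj
  have hroot_prod : ∀ k : Fin N, (hi * hj).eval (X k) = 0 := by
    intro k
    rcases eq_or_ne k i with rfl | hki
    · have : hj.eval (X k) = 0 :=
        Lagrange.eval_basis_of_ne (Ne.symm hij) (Finset.mem_univ k)
      simp [this]
    · have : hi.eval (X k) = 0 :=
        Lagrange.eval_basis_of_ne (Ne.symm hki) (Finset.mem_univ k)
      simp [this]
  have hp_dvd : p ∣ hi * hj :=
    Finset.prod_dvd_of_coprime hcop fun k _ =>
      dvd_iff_isRoot.mpr (hroot_prod k)
  have hp_dvd_P : p ∣ P :=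
    Finset.prod_dvd_of_coprime hcop fun k _ =>
      dvd_iff_isRoot.mpr (hroots k)
  have hpmonic : p.Monic := monic_prod_of_monic _ _ fun k _ => monic_X_sub_C _
  have hpdeg : p.natDegree = N := by
    rw [hp, natDegree_prod_of_monic _ _ fun k _ => monic_X_sub_C _]
    simp
  have hP0 : P ≠ 0 := by
    intro h; rw [h] at hPdeg; simp at hPdeg; omega
  obtain ⟨r, hr⟩ := hp_dvd_P
  have hr0 : r ≠ 0 := by rintro rfl; simp at hr; exact hP0 hr
  have hrdeg : r.natDegree = 0 := by
    have := natDegree_mul hpmonic.ne_zero hr0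
    rw [← hr, hPdeg, hpdeg] at this
    omega
  set c := r.coeff 0 with hc
  have hrC : r = C c := (Polynomial.eq_C_of_natDegree_eq_zero hrdeg)
  have hc0 : c ≠ 0 := by
    intro h; rw [hrC, h, map_zero, mul_zero] at hr; exact hP0 hr
  obtain ⟨q, hq⟩ := hp_dvd
  have hqdeg : q.degree < (N : WithBot ℕ) := by
    rcases eq_or_ne q 0 with rfl | hq0
    · simp only [degree_zero]; exact WithBot.bot_lt_coe N
    · have hne : hi * hj ≠ 0 := by
        rw [hq]; exact mul_ne_zero hpmonic.ne_zero hq0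
      have h1 : (hi * hj).natDegree = N + q.natDegree := by
        rw [hq, natDegree_mul hpmonic.ne_zero hq0, hpdeg]
      have h2 : (hi * hj).natDegree = (N - 1) + (N - 1) := by
        have hi0 : hi ≠ 0 := fun h => by simp [h] at hne
        have hj0 : hj ≠ 0 := fun h => by simp [h] at hne
        rw [natDegree_mul hi0 hj0, hdi, hdj]
      have : q.natDegree < N := by omega
      rw [degree_eq_natDegree hq0]
      exact_mod_cast this
  have key : ∀ x : ℝ, hi.eval x * hj.eval x = c⁻¹ * (P.eval x * q.eval x) := by
    intro x
    have hPx : P.eval x = p.eval x * c := by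
      rw [hr, hrC]; simp
    have hhx : hi.eval x * hj.eval x = p.eval x * q.eval x := by
      rw [← eval_mul, hq, eval_mul]
    rw [hhx, hPx]
    field_simp
  simp_rw [key]
  rw [intervalIntegral.integral_const_mul, hPorth q hqdeg, mul_zero]
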